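/- Let ρ = (√5−1)/2 and let aₙ = #{w ∈ {1,2}ⁿ × {0} : the maps F_w are pairwise distinct representatives}, i.e. aₙ = #W_{1,n} counts distinct maps F_{w₁}∘⋯∘F_{wₙ}∘F₀ with wᵢ ∈ {1,2}. Then there are constants c₁, c₂ > 0 such that c₁ ρ^{−n} ≤ aₙ ≤ c₂ ρ^{−n} for all n ≥ 1. (Equivalently: the number of distinct words of length n modulo the relation F₁F₂F₂ = F₂F₁F₁ grows like ρ^{−n} = φⁿ where φ is the golden ratio.) -/

import Mathlib

namespace Stmt2Aux

/-- value of a bool string: Tl l = Σ εᵢ ρ^i -/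
def Tl (ρ : ℝ) : List Bool → ℝ
  | [] => 0
  | b :: t => (if b then 1 else 0) + ρ * Tl ρ t

/-- no two consecutive `true`s -/
def good : List Bool → Prop := List.Chain' (fun a b => a = false ∨ b = false)

theorem good_tail {b : Bool} {l : List Bool} (h : good (b :: l)) : good l :=
  List.IsChain.tail h

theorem Tl_nonneg (ρ : ℝ) (hρ0 : 0 < ρ) : ∀ l : List Bool, 0 ≤ Tl ρ l
  | [] => le_refl _
  | b :: t => by
      have := Tl_nonneg ρ hρ0 t
      simp only [Tl]
      have : 0 ≤ ρ * Tl ρ t := mul_nonneg hρ0.le this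
      split <;> linarith

theorem Tl_lt (ρ : ℝ) (hρ0 : 0 < ρ) (hρq : ρ^2 + ρ = 1) :
    ∀ l : List Bool, good l → Tl ρ l < ρ + 1
  | [] , _ => by simp only [Tl]; nlinarith
  | false :: t, h => by
      have ih := Tl_lt ρ hρ0 hρq t (good_tail h)
      simp only [Tl, if_neg Bool.false_ne_true]
      nlinarith
  | true :: [], _ => by simp only [Tl]; norm_num; nlinarith
  | true :: true :: t, h => by
      rcases (List.isChain_cons_cons.mp h).1 with h' | h' <;> simp at h'
  | true :: false :: t, h => by
      have ih := Tl_lt ρ hρ0 hρq t (good_tail (good_tail h))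
      have hnn := Tl_nonneg ρ hρ0 t
      simp only [Tl, if_pos rfl, if_neg Bool.false_ne_true, if_true]
      norm_num
      nlinarith [mul_lt_mul_of_pos_left ih hρ0]

theorem Tl_inj (ρ : ℝ) (hρ0 : 0 < ρ) (hρq : ρ^2 + ρ = 1) :
    ∀ l₁ l₂ : List Bool, good l₁ → good l₂ → l₁.length = l₂.length →
      Tl ρ l₁ = Tl ρ l₂ → l₁ = l₂
  | [], [], _, _, _, _ => rfl
  | [], b :: t, _, _, hlen, _ => by simp at hlen
  | b :: t, [], _, _, hlen, _ => by simp at hlen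
  | b₁ :: t₁, b₂ :: t₂, h₁, h₂, hlen, hT => by
      have key : ∀ (s₁ s₂ : List Bool), good s₂ →
          (1 : ℝ) + ρ * Tl ρ s₁ = ρ * Tl ρ s₂ → 0 ≤ Tl ρ s₁ → False := by
        intro s₁ s₂ hg heq hnn
        have h1 : Tl ρ s₂ < ρ + 1 := Tl_lt ρ hρ0 hρq s₂ hg
        nlinarith [mul_lt_mul_of_pos_left h1 hρ0, mul_nonneg hρ0.le hnn]
      have hb : b₁ = b₂ := by
        by_contra hne
        simp only [Tl] at hT
        cases b₁ <;> cases b₂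
        · exact hne rfl
        · norm_num at hT
          exact key t₂ t₁ (good_tail h₁) (by linarith) (Tl_nonneg ρ hρ0 t₂)
        · norm_num at hT
          exact key t₁ t₂ (good_tail h₂) (by linarith) (Tl_nonneg ρ hρ0 t₁)
        · exact hne rfl
      subst hb
      have ht : t₁ = t₂ := by
        apply Tl_inj ρ hρ0 hρq t₁ t₂ (good_tail h₁) (good_tail h₂) (by simpa using hlen)
        have : ρ * Tl ρ t₁ = ρ * Tl ρ t₂ := by
          simp only [Tl] at hT; linarith
        exact mul_left_cancel₀ hρ0.ne' this
      rw [ht]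


/-- family of no-consecutive-true strings realizing Fibonacci count -/
def G : ℕ → Finset (List Bool)
  | 0 => {[]}
  | 1 => {[false], [true]}
  | (n+2) => (G (n+1)).image (false :: ·) ∪ (G n).image (fun l => true :: false :: l)

theorem G_length : ∀ n, ∀ l ∈ G n, l.length = n
  | 0, l, hl => by simp [G] at hl; simp [hl]
  | 1, l, hl => by simp [G] at hl; rcases hl with h | h <;> simp [h]
  | (n+2), l, hl => by
      simp only [G, Finset.mem_union, Finset.mem_image] at hl
      rcases hl with ⟨t, ht, rfl⟩ | ⟨t, ht, rfl⟩
      · simp [G_length (n+1) t ht]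
      · simp [G_length n t ht]

theorem G_good : ∀ n, ∀ l ∈ G n, good l
  | 0, l, hl => by simp [G] at hl; simp [hl, good, List.Chain']
  | 1, l, hl => by simp [G] at hl; rcases hl with h | h <;> simp [h, good, List.Chain']
  | (n+2), l, hl => by
      simp only [G, Finset.mem_union, Finset.mem_image] at hl
      rcases hl with ⟨t, ht, rfl⟩ | ⟨t, ht, rfl⟩
      · have := G_good (n+1) t ht
        cases t with
        | nil => simp [good, List.Chain']
        | cons b t' => exact List.isChain_cons_cons.mpr ⟨Or.inl rfl, this⟩
      · have hg := G_good n t ht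
        have : good (false :: t) := by
          cases t with
          | nil => simp [good, List.Chain']
          | cons b t' => exact List.isChain_cons_cons.mpr ⟨Or.inl rfl, hg⟩
        exact List.isChain_cons_cons.mpr ⟨Or.inr rfl, this⟩

theorem G_card : ∀ n, (G n).card = Nat.fib (n + 2)
  | 0 => by simp [G]
  | 1 => by simp [G]; decide
  | (n+2) => by
      have h1 : ((G (n+1)).image (false :: ·)).card = (G (n+1)).card :=
        Finset.card_image_of_injective _ (fun a b h => by simpa using h)
      have h2 : ((G n).image (fun l => true :: false :: l)).card = (G n).card :=
        Finset.card_image_of_injective _ (fun a b h => by simpa using h)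
      have hdisj : Disjoint ((G (n+1)).image (false :: ·))
          ((G n).image (fun l => true :: false :: l)) := by
        rw [Finset.disjoint_left]
        rintro l hl hl'
        simp only [Finset.mem_image] at hl hl'
        obtain ⟨t, _, rfl⟩ := hl
        obtain ⟨t', _, h⟩ := hl'
        simp at h
      rw [G, Finset.card_union_of_disjoint hdisj, h1, h2,
        G_card (n+1), G_card n]
      have e1 : Nat.fib (n+2+2) = Nat.fib (n+2) + Nat.fib (n+2+1) := Nat.fib_add_two
      have e2 : Nat.fib (n+1+2) = Nat.fib (n+2+1) := by norm_num
      omega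

/-- coefficients of ρ^i over ℤ: ρ^i = (ab i).1 + (ab i).2 * ρ -/
def ab : ℕ → ℤ × ℤ
  | 0 => (1, 0)
  | (i+1) => ((ab i).2, (ab i).1 - (ab i).2)

theorem pow_eq_ab (ρ : ℝ) (hρq : ρ^2 + ρ = 1) :
    ∀ i, ρ ^ i = ((ab i).1 : ℝ) + ((ab i).2 : ℝ) * ρ
  | 0 => by simp [ab]
  | (i+1) => by
      have ih := pow_eq_ab ρ hρq i
      simp only [ab]
      push_cast
      rw [pow_succ, ih]
      linear_combination ((ab i).2 : ℝ) * hρq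

theorem ab_exact : ∀ i, (ab i).1 = (-1:ℤ)^i * (Nat.fib (i+1) - Nat.fib i) ∧
    (ab i).2 = (-1:ℤ)^(i+1) * Nat.fib i
  | 0 => by simp [ab]
  | (i+1) => by
      obtain ⟨h1, h2⟩ := ab_exact i
      constructor
      · simp only [ab, h2]
        rw [show i+1+1 = i+2 by ring, Nat.fib_add_two]
        push_cast
        ring
      · simp only [ab, h1, h2]
        push_cast
        ring

theorem ab_snd_abs (i : ℕ) : |(ab i).2| = (Nat.fib i : ℤ) := by
  rw [(ab_exact i).2, abs_mul, abs_pow]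
  simp

theorem sum_fib_le : ∀ n : ℕ, ∑ i ∈ Finset.range n, Nat.fib i ≤ Nat.fib (n+1)
  | 0 => by simp
  | (n+1) => by
      rw [Finset.sum_range_succ]
      have := sum_fib_le n
      have h : Nat.fib (n+1+1) = Nat.fib n + Nat.fib (n+1) := Nat.fib_add_two
      omega

theorem fib_le_phi (ρ : ℝ) (hρ0 : 0 < ρ) (hρq : ρ^2 + ρ = 1) (n : ℕ) :
    (Nat.fib (n+1) : ℝ) ≤ (ρ + 1) ^ n := by
  have h2 : (ρ+1)^2 = (ρ+1) + 1 := by nlinarith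
  have h1 : (1:ℝ) ≤ ρ + 1 := by linarith
  induction n using Nat.twoStepInduction with
  | zero => simp
  | one => simpa using h1
  | more n ih1 ih2 =>
      rw [show n+2+1 = (n+1)+2 by ring, Nat.fib_add_two]
      push_cast
      calc (Nat.fib (n+1) : ℝ) + Nat.fib (n+2) ≤ (ρ+1)^n + (ρ+1)^(n+1) := by
              exact add_le_add ih1 ih2
        _ = (ρ+1)^n * ((ρ+1)+1) := by ring
        _ = (ρ+1)^n * (ρ+1)^2 := by rw [h2]
        _ = (ρ+1)^(n+2) := by ring

theorem phi_le_fib (ρ : ℝ) (hρ0 : 0 < ρ) (hρq : ρ^2 + ρ = 1) (n : ℕ) :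
    (ρ + 1) ^ n ≤ (Nat.fib (n+2) : ℝ) := by
  have h2 : (ρ+1)^2 = (ρ+1) + 1 := by nlinarith
  have h1 : (1:ℝ) ≤ ρ + 1 := by linarith
  induction n using Nat.twoStepInduction with
  | zero => simp
  | one => simp only [pow_one]
           have : (Nat.fib 3 : ℝ) = 2 := by norm_num [Nat.fib]
           rw [show 1+2 = 3 from rfl, this]
           nlinarith
  | more n ih1 ih2 =>
      rw [show n+2+2 = (n+2)+2 by ring, Nat.fib_add_two]
      push_cast
      calc (ρ+1)^(n+2) = (ρ+1)^n * (ρ+1)^2 := by ring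
        _ = (ρ+1)^n + (ρ+1)^(n+1) := by rw [h2]; ring
        _ ≤ (Nat.fib (n+2) : ℝ) + (Nat.fib (n+3) : ℝ) := add_le_add ih1 ih2
        _ = _ := by norm_num



theorem Tl_ofFn (ρ : ℝ) : ∀ (n : ℕ) (f : Fin n → Bool),
    Tl ρ (List.ofFn f) = ∑ i : Fin n, (if f i then (1:ℝ) else 0) * ρ^(i:ℕ)
  | 0, f => by simp [Tl]
  | (n+1), f => by
      rw [List.ofFn_succ]
      show (if f 0 then (1:ℝ) else 0) + ρ * Tl ρ (List.ofFn fun i => f i.succ) = _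
      rw [Tl_ofFn ρ n (fun i => f i.succ), Fin.sum_univ_succ, Finset.mul_sum]
      simp only [Fin.val_succ, Fin.val_zero, pow_zero, mul_one, pow_succ]
      congr 1
      apply Finset.sum_congr rfl
      intro i _
      split <;> ring

theorem rep (ρ : ℝ) (hρq : ρ^2 + ρ = 1) (n : ℕ) (f : Fin n → Bool) :
    ∃ A B : ℤ, Tl ρ (List.ofFn f) = (A : ℝ) + (B : ℝ) * ρ ∧ |B| ≤ (Nat.fib (n+1) : ℤ) := by
  refine ⟨∑ i : Fin n, (if f i then (ab i).1 else 0),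
    ∑ i : Fin n, (if f i then (ab i).2 else 0), ?_, ?_⟩
  · rw [Tl_ofFn]
    push_cast
    rw [Finset.sum_mul, ← Finset.sum_add_distrib]
    apply Finset.sum_congr rfl
    intro i _
    by_cases h : f i <;> simp [h, pow_eq_ab ρ hρq i]
  · calc |∑ i : Fin n, (if f i then (ab i).2 else 0)|
        ≤ ∑ i : Fin n, |if f i then (ab i).2 else 0| := Finset.abs_sum_le_sum_abs _ _
      _ ≤ ∑ i : Fin n, (Nat.fib i : ℤ) := by
          apply Finset.sum_le_sum
          intro i _
          by_cases h : f i <;> simp [h, ab_snd_abs]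
      _ = ∑ i ∈ Finset.range n, (Nat.fib i : ℤ) := Fin.sum_univ_eq_sum_range (fun i => (Nat.fib i : ℤ)) n
      _ ≤ (Nat.fib (n+1) : ℤ) := by
          have := sum_fib_le n
          exact_mod_cast this

theorem Tl_le (ρ : ℝ) (hρ0 : 0 < ρ) (hρ23 : ρ ≤ 2/3) (n : ℕ) (f : Fin n → Bool) :
    Tl ρ (List.ofFn f) ≤ 3 := by
  rw [Tl_ofFn]
  have h1 : ∑ i : Fin n, (if f i then (1:ℝ) else 0) * ρ^(i:ℕ) ≤ ∑ i : Fin n, ρ^(i:ℕ) := by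
    apply Finset.sum_le_sum
    intro i _
    by_cases h : f i <;> simp [h] <;> positivity
  have h2 : ∑ i : Fin n, ρ^(i:ℕ) = ∑ i ∈ Finset.range n, ρ^i := Fin.sum_univ_eq_sum_range _ n
  have h3 : ∑ i ∈ Finset.range n, ρ^i = (ρ^n - 1)/(ρ - 1) := geom_sum_eq (by linarith) n
  have h4 : (0:ℝ) ≤ ρ^n := by positivity
  have h5 : (ρ^n - 1)/(ρ - 1) = (1 - ρ^n)/(1 - ρ) := by
    rw [div_eq_div_iff (by linarith) (by linarith)]; ring
  have h6 : (1 - ρ^n)/(1 - ρ) ≤ 3 := by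
    rw [div_le_iff₀ (by linarith)]
    nlinarith
  linarith

/-- affine maps on the plane used as canonical forms -/
def H (ρ : ℝ) (q₀ q₂ : ℝ × ℝ) (n : ℕ) (t : ℝ) : ℝ × ℝ → ℝ × ℝ :=
  fun x => ρ^(n+2) • x + (((1-ρ) * t) • q₂ + (ρ^n * (1-ρ^2)) • q₀)


theorem card_upper (ρ : ℝ) (hρ0 : 0 < ρ) (hρq : ρ^2 + ρ = 1) (hρ23 : ρ ≤ 2/3) (n : ℕ) :
    (Finset.image (fun f : Fin n → Bool => Tl ρ (List.ofFn f)) Finset.univ).card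
      ≤ 12 * Nat.fib (n+1) := by
  classical
  set M : ℤ := (Nat.fib (n+1) : ℤ) with hM
  have hM1 : 1 ≤ M := by
    have h : 0 < Nat.fib (n+1) := Nat.fib_pos.mpr (by omega)
    omega
  set box : Finset (ℤ × ℤ) := Finset.Icc (-M) M ×ˢ Finset.Icc (0:ℤ) 3 with hbox
  set emb : ℤ × ℤ → ℝ := fun p => ((p.2 + ⌈(-(p.1:ℝ)) * ρ⌉ : ℤ) : ℝ) + (p.1:ℝ) * ρ with hemb
  have hsub : (Finset.image (fun f : Fin n → Bool => Tl ρ (List.ofFn f)) Finset.univ)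
      ⊆ box.image emb := by
    intro t ht
    simp only [Finset.mem_image, Finset.mem_univ, true_and] at ht
    obtain ⟨f, rfl⟩ := ht
    obtain ⟨A, B, hAB, hB⟩ := rep ρ hρq n f
    have ht0 : 0 ≤ Tl ρ (List.ofFn f) := Tl_nonneg ρ hρ0 _
    have ht3 : Tl ρ (List.ofFn f) ≤ 3 := Tl_le ρ hρ0 hρ23 n f
    set r : ℤ := A - ⌈(-(B:ℝ)) * ρ⌉ with hr
    have hceil_le : (-(B:ℝ)) * ρ ≤ (⌈(-(B:ℝ)) * ρ⌉ : ℝ) := Int.le_ceil _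
    have hr0 : 0 ≤ r := by
      have : (-(B:ℝ)) * ρ ≤ (A : ℝ) := by nlinarith [hAB ▸ ht0]
      have := Int.ceil_le.mpr this
      omega
    have hr3 : r ≤ 3 := by
      have hcast : (r : ℝ) ≤ 3 := by
        have : (r : ℝ) = (A : ℝ) - (⌈(-(B:ℝ)) * ρ⌉ : ℝ) := by push_cast [hr]; ring
        nlinarith [hAB ▸ ht3]
      exact_mod_cast hcast
    refine Finset.mem_image.mpr ⟨(B, r), ?_, ?_⟩
    · simp only [hbox, Finset.mem_product, Finset.mem_Icc]
      constructor
      · constructor <;> [exact neg_le_of_abs_le hB; exact le_of_abs_le hB]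
      · exact ⟨hr0, hr3⟩
    · simp only [hemb]
      rw [hAB]
      push_cast [hr]
      ring
  calc _ ≤ (box.image emb).card := Finset.card_le_card hsub
    _ ≤ box.card := Finset.card_image_le
    _ = (Finset.Icc (-M) M).card * (Finset.Icc (0:ℤ) 3).card := Finset.card_product _ _
    _ ≤ 12 * Nat.fib (n+1) := by
        rw [Int.card_Icc, Int.card_Icc]
        have h1 : (M + 1 - -M).toNat = 2 * Nat.fib (n+1) + 1 := by omega
        have h2 : ((3:ℤ) + 1 - 0).toNat = 4 := by decide
        rw [h1, h2]
        omega

theorem card_lower (ρ : ℝ) (hρ0 : 0 < ρ) (hρq : ρ^2 + ρ = 1) (n : ℕ) :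
    Nat.fib (n+2) ≤
      (Finset.image (fun f : Fin n → Bool => Tl ρ (List.ofFn f)) Finset.univ).card := by
  classical
  rw [← G_card n]
  have hinj : Set.InjOn (Tl ρ) (G n) := by
    intro l₁ h₁ l₂ h₂ h
    exact Tl_inj ρ hρ0 hρq l₁ l₂ (G_good n l₁ h₁) (G_good n l₂ h₂)
      (by rw [G_length n l₁ h₁, G_length n l₂ h₂]) h
  rw [← Finset.card_image_of_injOn hinj]
  apply Finset.card_le_card
  intro t ht
  simp only [Finset.mem_image] at ht ⊢
  obtain ⟨l, hl, rfl⟩ := ht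
  have hlen : l.length = n := G_length n l hl
  refine ⟨fun i => l.get (Fin.cast hlen.symm i), Finset.mem_univ _, ?_⟩
  congr 1
  rw [← List.ofFn_congr hlen l.get]
  exact List.ofFn_get l

/-- the composed map determined by a word -/
theorem fold_list (ρ : ℝ) (q₀ q₂ : ℝ × ℝ) (F₀ F₁ F₂ : ℝ × ℝ → ℝ × ℝ)
    (hF₀ : ∀ x, F₀ x = ρ^2 • (x - q₀) + q₀)
    (hF₁ : ∀ x, F₁ x = ρ • x)
    (hF₂ : ∀ x, F₂ x = ρ • (x - q₂) + q₂) :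
    ∀ l : List Bool,
      (l.map fun b => if b then F₂ else F₁).foldr (· ∘ ·) F₀
        = H ρ q₀ q₂ l.length (Tl ρ l)
  | [] => by
      funext x
      simp only [List.map_nil, List.foldr_nil, H, Tl, List.length_nil]
      rw [hF₀]
      module
  | b :: t => by
      have ih := fold_list ρ q₀ q₂ F₀ F₁ F₂ hF₀ hF₁ hF₂ t
      cases b
      · funext x
        have hhead : ((fun b : Bool => if b then F₂ else F₁) false) = F₁ := rfl
        simp only [List.map_cons, List.foldr_cons, hhead, Function.comp_apply, ih,
          List.length_cons, if_true]
        rw [hF₁]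
        simp only [H, Tl, if_neg Bool.false_ne_true]
        module
      · funext x
        have hhead : ((fun b : Bool => if b then F₂ else F₁) true) = F₂ := rfl
        simp only [List.map_cons, List.foldr_cons, hhead, Function.comp_apply, ih,
          List.length_cons, if_true]
        rw [hF₂]
        simp only [H, Tl, if_true]
        module

end Stmt2Aux


theorem stmt_2 (ρ : ℝ) (hρ : ρ = (Real.sqrt 5 - 1) / 2)
    (q₀ q₁ q₂ : ℝ × ℝ)
    (hq₀ : q₀ = (1/2, Real.sqrt 3 / 2)) (hq₁ : q₁ = (0, 0)) (hq₂ : q₂ = (1, 0))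
    (F₀ F₁ F₂ : ℝ × ℝ → ℝ × ℝ)
    (hF₀ : ∀ x, F₀ x = ρ ^ 2 • (x - q₀) + q₀)
    (hF₁ : ∀ x, F₁ x = ρ • (x - q₁) + q₁)
    (hF₂ : ∀ x, F₂ x = ρ • (x - q₂) + q₂)
    (a : ℕ → ℕ)
    (ha : ∀ n, a n = Set.ncard {g : ℝ × ℝ → ℝ × ℝ |
      ∃ w : Fin n → Fin 2,
        g = (List.ofFn fun i => if w i = 0 then F₁ else F₂).foldr (· ∘ ·) F₀}) :
    ∃ c₁ c₂ : ℝ, 0 < c₁ ∧ 0 < c₂ ∧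
      ∀ n : ℕ, 1 ≤ n → c₁ * ρ ^ (-(n : ℝ)) ≤ (a n : ℝ) ∧ (a n : ℝ) ≤ c₂ * ρ ^ (-(n : ℝ)) := by
  classical
  have hs5 : Real.sqrt 5 ^ 2 = 5 := Real.sq_sqrt (by norm_num)
  have hs5' : 0 ≤ Real.sqrt 5 := Real.sqrt_nonneg 5
  have hρ0 : 0 < ρ := by rw [hρ]; nlinarith
  have hρq : ρ ^ 2 + ρ = 1 := by rw [hρ]; nlinarith
  have hρ23 : ρ ≤ 2/3 := by rw [hρ]; nlinarith
  have hρ1 : ρ < 1 := by nlinarith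
  have hφ : ρ⁻¹ = ρ + 1 := inv_eq_of_mul_eq_one_right (by nlinarith)
  have hrpow : ∀ n : ℕ, ρ ^ (-(n : ℝ)) = (ρ + 1) ^ n := by
    intro n
    rw [Real.rpow_neg hρ0.le, Real.rpow_natCast, ← inv_pow, hφ]
  have hF₁' : ∀ x, F₁ x = ρ • x := by
    intro x
    rw [hF₁, hq₁]
    simp [Prod.mk_zero_zero]
  have key : ∀ n : ℕ, a n =
      (Finset.image (fun f : Fin n → Bool => Stmt2Aux.Tl ρ (List.ofFn f)) Finset.univ).card := by
    intro n
    rw [ha n]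
    have hhi : Function.Injective (Stmt2Aux.H ρ q₀ q₂ n) := by
      intro t t' h
      have h0 := congrFun h 0
      simp only [Stmt2Aux.H, smul_zero, zero_add, hq₂, hq₀, Prod.smul_mk, Prod.mk_add_mk,
        Prod.mk.injEq, smul_eq_mul] at h0
      have h1 := h0.1
      have h2 : (1 - ρ) * t = (1 - ρ) * t' := by linarith
      exact mul_left_cancel₀ (by linarith : (1:ℝ) - ρ ≠ 0) h2
    have hset : {g : ℝ × ℝ → ℝ × ℝ | ∃ w : Fin n → Fin 2,
          g = (List.ofFn fun i => if w i = 0 then F₁ else F₂).foldr (· ∘ ·) F₀}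
        = Stmt2Aux.H ρ q₀ q₂ n '' (Set.range fun f : Fin n → Bool => Stmt2Aux.Tl ρ (List.ofFn f)) := by
      ext g
      simp only [Set.mem_setOf_eq, Set.mem_image, Set.mem_range]
      constructor
      · rintro ⟨w, rfl⟩
        refine ⟨Stmt2Aux.Tl ρ (List.ofFn fun i => (decide (w i ≠ 0) : Bool)), ⟨_, rfl⟩, ?_⟩
        have hlist : (List.ofFn fun i => if w i = 0 then F₁ else F₂)
            = ((List.ofFn fun i => (decide (w i ≠ 0) : Bool)).map
                fun b => if b then F₂ else F₁) := by
          rw [List.map_ofFn]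
          congr 1
          funext i
          by_cases h : w i = 0 <;> simp [h]
        rw [hlist, Stmt2Aux.fold_list ρ q₀ q₂ F₀ F₁ F₂ hF₀ hF₁' hF₂, List.length_ofFn]
      · rintro ⟨t, ⟨f, rfl⟩, rfl⟩
        refine ⟨fun i => if f i then 1 else 0, ?_⟩
        have hlist : (List.ofFn fun i =>
              if (if f i then (1 : Fin 2) else 0) = 0 then F₁ else F₂)
            = ((List.ofFn f).map fun b => if b then F₂ else F₁) := by
          rw [List.map_ofFn]
          congr 1
          funext i
          by_cases h : f i <;> simp [h]
        rw [hlist, Stmt2Aux.fold_list ρ q₀ q₂ F₀ F₁ F₂ hF₀ hF₁' hF₂, List.length_ofFn]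
    rw [hset, Set.ncard_image_of_injective _ hhi]
    have hr : (Set.range fun f : Fin n → Bool => Stmt2Aux.Tl ρ (List.ofFn f))
        = ↑(Finset.image (fun f : Fin n → Bool => Stmt2Aux.Tl ρ (List.ofFn f)) Finset.univ) := by
      rw [Finset.coe_image, Finset.coe_univ, Set.image_univ]
    rw [hr, Set.ncard_coe_finset]
  refine ⟨1, 12, one_pos, by norm_num, ?_⟩
  intro n _
  rw [hrpow n]
  constructor
  · have h1 : (ρ + 1) ^ n ≤ (Nat.fib (n + 2) : ℝ) := Stmt2Aux.phi_le_fib ρ hρ0 hρq n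
    have h2 : Nat.fib (n + 2) ≤ a n := by
      rw [key n]
      exact Stmt2Aux.card_lower ρ hρ0 hρq n
    have h2' : (Nat.fib (n + 2) : ℝ) ≤ (a n : ℝ) := by exact_mod_cast h2
    linarith
  · have h1 : a n ≤ 12 * Nat.fib (n + 1) := by
      rw [key n]
      exact Stmt2Aux.card_upper ρ hρ0 hρq hρ23 n
    have h1' : (a n : ℝ) ≤ 12 * (Nat.fib (n + 1) : ℝ) := by exact_mod_cast h1
    have h2 : (Nat.fib (n + 1) : ℝ) ≤ (ρ + 1) ^ n := Stmt2Aux.fib_le_phi ρ hρ0 hρq n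
    linarith
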